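/- Let Ω ⊆ ℝᵈ be open, g : Ω → ℝᵉ a C¹ map, and X = (X₁,X₂) : ℝᵈ×ℝᵉ → ℝᵈ×ℝᵉ a locally Lipschitz vector field that is tangent to the graph Γ = {(u, g(u)) : u ∈ Ω} at each of its points, i.e. X₂(u,g(u)) = Dg(u)·X₁(u,g(u)) for all u ∈ Ω. If γ : [0,T] → ℝᵈ×ℝᵉ is an integral curve of X with γ(0) ∈ Γ and with first component γ₁(t) ∈ Ω for all t ∈ [0,T], then γ(t) ∈ Γ for all t ∈ [0,T]. (A weakly invariant C¹ graph contains every orbit starting on it for as long as the orbit's base point stays in the domain of the graph.) -/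

import Mathlib

open Set Metric Real

/-- A locally Lipschitz map is Lipschitz on every compact set. -/
lemma locallyLipschitz_lipschitzOnWith_isCompact
    {α β : Type*} [MetricSpace α] [MetricSpace β] {f : α → β}
    (hf : LocallyLipschitz f) {K : Set α} (hK : IsCompact K) :
    ∃ L : NNReal, LipschitzOnWith L f K := by
  rcases K.eq_empty_or_nonempty with rfl | hne
  · exact ⟨1, by simp⟩
  have hfc : Continuous f := hf.continuous
  choose C t ht hlip using hf
  choose r hr hball using fun x => Metric.mem_nhds_iff.1 (ht x)
  obtain ⟨s, hscov⟩ := hK.elim_finite_subcover (fun x : α => ball x (r x / 2))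
    (fun x => isOpen_ball) (fun x hx => mem_iUnion.2 ⟨x, mem_ball_self (by have := hr x; linarith)⟩)
  have hsne : s.Nonempty := by
    rcases hne with ⟨x, hx⟩
    rcases mem_iUnion₂.1 (hscov hx) with ⟨i, hi, _⟩
    exact ⟨i, hi⟩
  set ρ : ℝ := s.inf' hsne (fun x => r x / 2) with hρdef
  have hρpos : 0 < ρ := by
    rw [hρdef]
    refine (Finset.lt_inf'_iff hsne).2 fun x _ => ?_
    have := hr x; linarith
  set L₀ : NNReal := s.sup' hsne C with hL₀def
  obtain ⟨D, hD⟩ := Metric.isBounded_iff.1 (hK.image hfc).isBounded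
  have hD0 : 0 ≤ D := by
    rcases hne with ⟨x, hx⟩
    simpa using hD (mem_image_of_mem f hx) (mem_image_of_mem f hx)
  set M : ℝ := max (L₀ : ℝ) (D / ρ) with hMdef
  refine ⟨Real.toNNReal M, LipschitzOnWith.of_dist_le_mul fun a ha b hb => ?_⟩
  have hMcoe : ((Real.toNNReal M : NNReal) : ℝ) = M :=
    Real.coe_toNNReal _ (le_trans L₀.coe_nonneg (le_max_left _ _))
  rw [hMcoe]
  rcases lt_or_ge (dist a b) ρ with hlt | hge
  · rcases mem_iUnion₂.1 (hscov ha) with ⟨i, hi, hai⟩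
    have hρle : ρ ≤ r i / 2 := Finset.inf'_le _ hi
    have hai' : dist a i < r i / 2 := mem_ball.1 hai
    have hat : a ∈ t i := hball i (mem_ball.2 (by have := hr i; linarith))
    have hbt : b ∈ t i := by
      apply hball i
      apply mem_ball.2
      have h1 : dist b i ≤ dist b a + dist a i := dist_triangle _ _ _
      have h2 : dist b a < ρ := by rwa [dist_comm]
      linarith
    calc dist (f a) (f b) ≤ (C i : ℝ) * dist a b := (hlip i).dist_le_mul a hat b hbt
      _ ≤ M * dist a b := by
          apply mul_le_mul_of_nonneg_right _ dist_nonneg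
          refine le_trans ?_ (le_max_left _ _)
          exact_mod_cast Finset.le_sup' C hi
  · calc dist (f a) (f b) ≤ D := hD (mem_image_of_mem f ha) (mem_image_of_mem f hb)
      _ = D / ρ * ρ := by field_simp
      _ ≤ D / ρ * dist a b := mul_le_mul_of_nonneg_left hge (div_nonneg hD0 hρpos.le)
      _ ≤ M * dist a b := mul_le_mul_of_nonneg_right (le_max_right _ _) dist_nonneg

/-- a weakly invariant C¹ graph contains every orbit starting on it, for as
long as the orbit's base point stays in the domain of the graph. -/
theorem weakly_invariant_graph_contains_orbits
    (d e : ℕ) (Ω : Set (Fin d → ℝ)) (hΩ : IsOpen Ω)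
    (g : (Fin d → ℝ) → (Fin e → ℝ)) (hg : ContDiffOn ℝ 1 g Ω)
    (X : (Fin d → ℝ) × (Fin e → ℝ) → (Fin d → ℝ) × (Fin e → ℝ))
    (hX : LocallyLipschitz X)
    (htangent : ∀ u ∈ Ω, (X (u, g u)).2 = fderiv ℝ g u ((X (u, g u)).1))
    (T : ℝ) (hT : 0 ≤ T)
    (γ : ℝ → (Fin d → ℝ) × (Fin e → ℝ))
    (hγ : ∀ t ∈ Set.Icc 0 T, HasDerivAt γ (X (γ t)) t)
    (hγ0 : (γ 0).1 ∈ Ω ∧ (γ 0).2 = g (γ 0).1)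
    (hbase : ∀ t ∈ Set.Icc 0 T, (γ t).1 ∈ Ω) :
    ∀ t ∈ Set.Icc 0 T, (γ t).2 = g ((γ t).1) := by
  have hgdiff : ∀ u ∈ Ω, DifferentiableAt ℝ g u := fun u hu =>
    (hg.differentiableOn one_ne_zero).differentiableAt (hΩ.mem_nhds hu)
  have hγcont : ContinuousOn γ (Set.Icc 0 T) := fun t ht =>
    (hγ t ht).continuousAt.continuousWithinAt
  have hgcont : ContinuousOn g Ω := hg.continuousOn
  set σ : ℝ → (Fin d → ℝ) × (Fin e → ℝ) := fun t => ((γ t).1, g ((γ t).1)) with hσdef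
  have hσcont : ContinuousOn σ (Set.Icc 0 T) :=
    ContinuousOn.prodMk (hγcont.fst) (hgcont.comp hγcont.fst hbase)
  have hAcomp : IsCompact (γ '' Set.Icc 0 T) := isCompact_Icc.image_of_continuousOn hγcont
  have hBcomp : IsCompact (σ '' Set.Icc 0 T) := isCompact_Icc.image_of_continuousOn hσcont
  set S : Set ((Fin d → ℝ) × (Fin e → ℝ)) := γ '' Set.Icc 0 T ∪ σ '' Set.Icc 0 T with hSdef
  have hScomp : IsCompact S := hAcomp.union hBcomp
  obtain ⟨L, hL⟩ := locallyLipschitz_lipschitzOnWith_isCompact hX hScomp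
  -- bound on ‖Dg‖ along the trajectory
  have hPcomp : IsCompact ((fun t => (γ t).1) '' Set.Icc 0 T) :=
    isCompact_Icc.image_of_continuousOn hγcont.fst
  have hfdercont : ContinuousOn (fun u => ‖fderiv ℝ g u‖) Ω :=
    (hg.continuousOn_fderiv_of_isOpen hΩ le_rfl).norm
  obtain ⟨M0, hM0⟩ := hPcomp.exists_bound_of_continuousOn
    (hfdercont.mono (by rintro _ ⟨t, ht, rfl⟩; exact hbase t ht)).norm
  set M : ℝ := max M0 0 with hMdef
  have hMbound : ∀ t ∈ Set.Icc 0 T, ‖fderiv ℝ g ((γ t).1)‖ ≤ M := by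
    intro t ht
    have := hM0 _ (mem_image_of_mem _ ht)
    simp only [norm_norm] at this
    exact this.trans (le_max_left _ _)
  -- the deviation function
  set h : ℝ → (Fin e → ℝ) := fun t => (γ t).2 - g ((γ t).1) with hhdef
  set h' : ℝ → (Fin e → ℝ) :=
    fun t => (X (γ t)).2 - fderiv ℝ g ((γ t).1) ((X (γ t)).1) with hh'def
  have hderiv : ∀ t ∈ Set.Icc 0 T, HasDerivAt h (h' t) t := by
    intro t ht
    have hγt := hγ t ht
    have h2 : HasDerivAt (fun s => (γ s).2) ((X (γ t)).2) t :=
      ((ContinuousLinearMap.snd ℝ (Fin d → ℝ) (Fin e → ℝ)).hasFDerivAt.comp_hasDerivAt t hγt)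
    have h1 : HasDerivAt (fun s => (γ s).1) ((X (γ t)).1) t :=
      ((ContinuousLinearMap.fst ℝ (Fin d → ℝ) (Fin e → ℝ)).hasFDerivAt.comp_hasDerivAt t hγt)
    have hgd : HasFDerivAt g (fderiv ℝ g ((γ t).1)) ((γ t).1) :=
      (hgdiff _ (hbase t ht)).hasFDerivAt
    exact h2.sub (hgd.comp_hasDerivAt t h1)
  have hcont : ContinuousOn h (Set.Icc 0 T) := fun t ht =>
    ((hderiv t ht).continuousAt).continuousWithinAt
  -- Gronwall bound on h
  set Kc : ℝ := (1 + M) * L with hKcdef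
  have key : ∀ t ∈ Set.Icc 0 T, ‖h t‖ ≤ gronwallBound 0 Kc 0 (t - 0) := by
    apply norm_le_gronwallBound_of_norm_deriv_right_le hcont
      (fun t ht => (hderiv t (Set.Ico_subset_Icc_self ht)).hasDerivWithinAt)
    · simp [hhdef, hγ0.2]
    · intro t ht
      have ht' : t ∈ Set.Icc 0 T := Set.Ico_subset_Icc_self ht
      set a := γ t with hadef
      set b := ((γ t).1, g ((γ t).1)) with hbdef
      have haS : a ∈ S := Or.inl (mem_image_of_mem _ ht')
      have hbS : b ∈ S := Or.inr (mem_image_of_mem σ ht')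
      have hu : (γ t).1 ∈ Ω := hbase t ht'
      have htan : (X b).2 = fderiv ℝ g ((γ t).1) ((X b).1) := htangent _ hu
      have hXab : ‖X a - X b‖ ≤ (L : ℝ) * ‖h t‖ := by
        have hd := hL.dist_le_mul a haS b hbS
        rw [dist_eq_norm, dist_eq_norm] at hd
        have hab : ‖a - b‖ = ‖h t‖ := by
          have : a - b = (0, h t) := by
            simp [hadef, hbdef, hhdef, Prod.ext_iff]
          rw [this, Prod.norm_def]
          simp [norm_nonneg]
        rwa [hab] at hd
      have hM' : 0 ≤ M := le_max_right _ _
      have : h' t = ((X a).2 - (X b).2)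
          - fderiv ℝ g ((γ t).1) ((X a).1 - (X b).1) := by
        rw [hh'def]
        simp only [map_sub, htan]
        abel
      rw [this]
      have e1 : ‖(X a).2 - (X b).2‖ ≤ ‖X a - X b‖ := by
        have := norm_snd_le (X a - X b); simpa using this
      have e2 : ‖fderiv ℝ g ((γ t).1) ((X a).1 - (X b).1)‖ ≤ M * ‖X a - X b‖ := by
        calc ‖fderiv ℝ g ((γ t).1) ((X a).1 - (X b).1)‖
            ≤ ‖fderiv ℝ g ((γ t).1)‖ * ‖(X a).1 - (X b).1‖ :=
              (fderiv ℝ g ((γ t).1)).le_opNorm _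
          _ ≤ M * ‖X a - X b‖ := by
              apply mul_le_mul (hMbound t ht') _ (norm_nonneg _) hM'
              have := norm_fst_le (X a - X b); simpa using this
      calc ‖(X a).2 - (X b).2 - fderiv ℝ g ((γ t).1) ((X a).1 - (X b).1)‖
          ≤ ‖(X a).2 - (X b).2‖ + ‖fderiv ℝ g ((γ t).1) ((X a).1 - (X b).1)‖ :=
            norm_sub_le _ _
        _ ≤ ‖X a - X b‖ + M * ‖X a - X b‖ := add_le_add e1 e2
        _ = (1 + M) * ‖X a - X b‖ := by ring
        _ ≤ (1 + M) * ((L : ℝ) * ‖h t‖) := by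
            apply mul_le_mul_of_nonneg_left hXab (by linarith)
        _ = Kc * ‖h t‖ + 0 := by rw [hKcdef]; ring
  intro t ht
  have := key t ht
  rw [gronwallBound_ε0_δ0] at this
  have hnorm : ‖h t‖ ≤ 0 := this
  have : h t = 0 := by
    have := le_antisymm hnorm (norm_nonneg _)
    exact norm_eq_zero.1 this
  have := sub_eq_zero.1 this
  simpa [hhdef] using this
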